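/- Let M₁(a) denote the number of pairs (n,k) of positive integers with 1 ≤ k ≤ n such that the unsigned Stirling number of the first kind c(n,k) equals a. Then, as a → ∞, M₁(a) = O( log a / (log log a − log log log a) ). -/

import Mathlib

open Nat

/-- Unsigned Stirling numbers of the first kind, defined by the standard recurrence. -/
def stirling1 : ℕ → ℕ → ℕ
  | 0, 0 => 1
  | 0, _ + 1 => 0
  | _ + 1, 0 => 0
  | n + 1, k + 1 => stirling1 n k + n * stirling1 n (k + 1)

lemma stirling1_succ (n k : ℕ) :
    stirling1 (n+1) (k+1) = stirling1 n k + n * stirling1 n (k+1) := rfl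

lemma stirling1_zero (n : ℕ) : stirling1 (n+1) 0 = 0 := rfl

lemma stirling1_of_lt : ∀ n k, n < k → stirling1 n k = 0
  | 0, k+1, _ => rfl
  | n+1, k+1, h => by
    rw [stirling1_succ, stirling1_of_lt n k (by omega), stirling1_of_lt n (k+1) (by omega)]
    simp

lemma stirling1_self : ∀ n, stirling1 n n = 1
  | 0 => rfl
  | n+1 => by
    rw [stirling1_succ, stirling1_self n, stirling1_of_lt n (n+1) (by omega)]
    simp

lemma stirling1_pos : ∀ n k, 1 ≤ k → k ≤ n → 0 < stirling1 n k
  | 0, _, h1, h2 => by omega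
  | _+1, 0, h1, _ => by omega
  | n+1, k+1, _, h => by
    rcases eq_or_lt_of_le h with h' | h'
    · rw [h', stirling1_self]; norm_num
    · rw [stirling1_succ]
      have h2 := stirling1_pos n (k+1) (by omega) (by omega)
      have h3 : 0 < n * stirling1 n (k+1) := Nat.mul_pos (by omega) h2
      omega

lemma stirling1_one : ∀ n, stirling1 (n+1) 1 = n !
  | 0 => rfl
  | n+1 => by
    rw [stirling1_succ, stirling1_zero, stirling1_one n, Nat.factorial_succ]
    ring

lemma g_strictMono {j : ℕ} (hj : 1 ≤ j) :
    StrictMono (fun m => stirling1 (j+1+m) (1+m)) := by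
  apply strictMono_nat_of_lt_succ
  intro m
  have h1 : j+1+(m+1) = (j+1+m)+1 := by ring
  have h2 : 1+(m+1) = (1+m)+1 := by ring
  simp only [h1, h2, stirling1_succ]
  have hp : 0 < stirling1 (j+1+m) (1+m+1) := stirling1_pos _ _ (by omega) (by omega)
  have : 0 < (j+1+m) * stirling1 (j+1+m) (1+m+1) := by positivity
  omega

lemma factorial_le_g {j : ℕ} (hj : 1 ≤ j) (m : ℕ) : j ! ≤ stirling1 (j+1+m) (1+m) := by
  have h0 : stirling1 (j+1+0) (1+0) = j ! := stirling1_one j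
  calc j ! = stirling1 (j+1+0) (1+0) := h0.symm
    _ ≤ stirling1 (j+1+m) (1+m) := (g_strictMono hj).monotone (Nat.zero_le m)

lemma pow_le_two_mul_factorial (m : ℕ) : m ^ m ≤ (2*m)! := by
  have h1 : (2*m + 1 - m) ^ m ≤ (2*m).descFactorial m := Nat.pow_sub_le_descFactorial (2*m) m
  have h2 : (2*m - m)! * (2*m).descFactorial m = (2*m)! :=
    Nat.factorial_mul_descFactorial (by omega)
  have h3 : m ^ m ≤ (2*m + 1 - m) ^ m := Nat.pow_le_pow_left (by omega) m
  have h4 : (2*m).descFactorial m ≤ (2*m)! := by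
    rw [← h2]
    have := Nat.one_le_iff_ne_zero.2 (Nat.factorial_ne_zero (2*m - m))
    exact Nat.le_mul_of_pos_left _ (by omega)
  omega

/-- `M₁ a` is the number of pairs `(n, k)` with `1 ≤ k ≤ n` and `c(n, k) = a`. -/
noncomputable def M1 (a : ℕ) : ℕ :=
  Nat.card {p : ℕ × ℕ // 1 ≤ p.2 ∧ p.2 ≤ p.1 ∧ stirling1 p.1 p.2 = a}

lemma M1_le (a : ℕ) (ha : 2 ≤ a) :
    M1 a ≤ ((Finset.Icc 1 a).filter (fun j => j ! ≤ a)).card := by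
  classical
  set F := (Finset.Icc 1 a).filter (fun j => j ! ≤ a) with hF
  have key : ∀ n k : ℕ, 1 ≤ k → k ≤ n → stirling1 n k = a →
      1 ≤ n - k ∧ (n - k)! ≤ a := by
    intro n k hk1 hkn hs
    have hj : 1 ≤ n - k := by
      rcases Nat.lt_or_ge k n with h | h
      · omega
      · exfalso; have : k = n := by omega
        rw [this, stirling1_self] at hs; omega
    refine ⟨hj, ?_⟩
    have hle := factorial_le_g hj (k - 1)
    have he : (n - k) + 1 + (k - 1) = n := by omega
    have he2 : 1 + (k - 1) = k := by omega
    rw [he, he2] at hle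
    omega
  have main : Nat.card {p : ℕ × ℕ // 1 ≤ p.2 ∧ p.2 ≤ p.1 ∧ stirling1 p.1 p.2 = a}
      ≤ Nat.card {j // j ∈ F} := by
    apply Nat.card_le_card_of_injective
      (f := fun p => (⟨p.1.1 - p.1.2, by
        obtain ⟨h1, h2⟩ := key p.1.1 p.1.2 p.2.1 p.2.2.1 p.2.2.2
        simp only [hF, Finset.mem_filter, Finset.mem_Icc]
        exact ⟨⟨h1, le_trans (Nat.self_le_factorial _) h2⟩, h2⟩⟩ : {j // j ∈ F}))
    rintro ⟨⟨n1, k1⟩, h11, h12, h13⟩ ⟨⟨n2, k2⟩, h21, h22, h23⟩ hEq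
    simp only [Subtype.mk.injEq, Prod.mk.injEq] at hEq ⊢
    obtain ⟨hj1, _⟩ := key n1 k1 h11 h12 h13
    obtain ⟨hj2, _⟩ := key n2 k2 h21 h22 h23
    set j := n1 - k1 with hjd
    have hjj : n2 - k2 = j := hEq.symm
    have he1 : j + 1 + (k1 - 1) = n1 := by omega
    have hf1 : 1 + (k1 - 1) = k1 := by omega
    have he2 : j + 1 + (k2 - 1) = n2 := by omega
    have hf2 : 1 + (k2 - 1) = k2 := by omega
    have hg1 : stirling1 (j+1+(k1-1)) (1+(k1-1)) = a := by rw [he1, hf1]; exact h13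
    have hg2 : stirling1 (j+1+(k2-1)) (1+(k2-1)) = a := by rw [he2, hf2]; exact h23
    have hm : k1 - 1 = k2 - 1 := by
      apply (g_strictMono hj1).injective
      simp only [hg1, hg2]
    constructor <;> omega
  rwa [Nat.card_eq_finsetCard] at main

lemma elem_bound (a : ℕ) (ha : 21 ≤ a) :
    ∀ j : ℕ, 1 ≤ j → j ! ≤ a →
      (j : ℝ) ≤ 6 * (Real.log a / (Real.log (Real.log a) - Real.log (Real.log (Real.log a)))) := by
  intro j hj1 hja
  set L := Real.log a with hL
  set LL := Real.log L with hLL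
  set LLL := Real.log LL with hLLL
  have haR : (21 : ℝ) ≤ (a : ℝ) := by exact_mod_cast ha
  have hL3 : (3 : ℝ) ≤ L := by
    rw [hL, Real.le_log_iff_exp_le (by linarith)]
    have h1 : Real.exp 3 = Real.exp 1 ^ 3 := by
      rw [← Real.exp_nat_mul]; norm_num
    have h2 : Real.exp 1 ^ 3 ≤ (2.7182818286 : ℝ) ^ 3 := by
      apply pow_le_pow_left₀ (Real.exp_nonneg 1) Real.exp_one_lt_d9.le
    nlinarith [h1, h2]
  have hLL1 : (1 : ℝ) ≤ LL := by
    rw [hLL]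
    calc (1:ℝ) = Real.log (Real.exp 1) := (Real.log_exp 1).symm
      _ ≤ Real.log L := by
          apply Real.log_le_log (Real.exp_pos 1)
          have := Real.exp_one_lt_d9
          linarith
  have hLLL0 : (0 : ℝ) ≤ LLL := Real.log_nonneg hLL1
  have hD : 0 < LL - LLL := by
    have := Real.add_one_le_exp LLL
    have h2 : Real.exp LLL = LL := Real.exp_log (by linarith)
    linarith
  set D := LL - LLL with hDd
  have hDLL : D ≤ LL := by linarith
  have hlogD : Real.log D ≤ LLL := by
    calc Real.log D ≤ Real.log LL := Real.log_le_log hD hDLL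
      _ = LLL := rfl
  have hLLle : LL ≤ L := Real.log_le_self (by linarith)
  set T := 2 * L / D with hT
  have hT2 : (2 : ℝ) ≤ T := by
    rw [hT, le_div_iff₀ hD]; nlinarith
  have hlogT : D ≤ Real.log T := by
    rw [hT, Real.log_div (by positivity) (by positivity), Real.log_mul (by norm_num) (by positivity)]
    have h2 : (0:ℝ) ≤ Real.log 2 := Real.log_nonneg (by norm_num)
    have : Real.log L = LL := rfl
    linarith
  -- main bound: j ≤ 3 T
  have hjT : (j : ℝ) ≤ 3 * T := by
    set m := j / 2 with hm
    rcases Nat.eq_zero_or_pos m with hm0 | hm1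
    · have : j = 1 := by omega
      rw [this]; push_cast; linarith
    · have hfac : m ^ m ≤ a := by
        calc m ^ m ≤ (2 * m)! := pow_le_two_mul_factorial m
          _ ≤ j ! := Nat.factorial_le (by omega)
          _ ≤ a := hja
      have hmlog : (m : ℝ) * Real.log m ≤ L := by
        have h1 : ((m : ℝ)) ^ (m:ℕ) ≤ (a : ℝ) := by exact_mod_cast hfac
        have h2 : Real.log ((m:ℝ) ^ (m:ℕ)) ≤ L := by
          apply Real.log_le_log (by positivity) h1
        rwa [Real.log_pow] at h2
      have hmT : (m : ℝ) ≤ T := by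
        by_contra hc
        push_neg at hc
        have hlm : Real.log T ≤ Real.log m := Real.log_le_log (by linarith) hc.le
        have hTD : 2 * L ≤ T * D := by rw [hT]; field_simp; norm_num
        have : T * Real.log T ≤ (m:ℝ) * Real.log m := by
          apply mul_le_mul hc.le hlm (by linarith) (by positivity)
        nlinarith
      have hj3 : (j : ℝ) ≤ 3 * (m : ℝ) := by
        have : j ≤ 3 * m := by omega
        exact_mod_cast this
      linarith
  calc (j:ℝ) ≤ 3 * T := hjT
    _ = 6 * (L / D) := by rw [hT]; ring

lemma aux_logs (a : ℕ) (ha : 21 ≤ a) :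
    3 ≤ Real.log a ∧
      0 < Real.log (Real.log a) - Real.log (Real.log (Real.log a)) := by
  have haR : (21 : ℝ) ≤ (a : ℝ) := by exact_mod_cast ha
  have hL3 : (3 : ℝ) ≤ Real.log a := by
    rw [Real.le_log_iff_exp_le (by linarith)]
    have h1 : Real.exp 3 = Real.exp 1 ^ 3 := by
      rw [← Real.exp_nat_mul]; norm_num
    have h2 : Real.exp 1 ^ 3 ≤ (2.7182818286 : ℝ) ^ 3 := by
      apply pow_le_pow_left₀ (Real.exp_nonneg 1) Real.exp_one_lt_d9.le
    nlinarith [h1, h2]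
  refine ⟨hL3, ?_⟩
  have hLL1 : (1 : ℝ) ≤ Real.log (Real.log a) := by
    calc (1:ℝ) = Real.log (Real.exp 1) := (Real.log_exp 1).symm
      _ ≤ Real.log (Real.log a) := by
          apply Real.log_le_log (Real.exp_pos 1)
          have := Real.exp_one_lt_d9
          linarith
  have h3 := Real.add_one_le_exp (Real.log (Real.log (Real.log a)))
  have h4 : Real.exp (Real.log (Real.log (Real.log a))) = Real.log (Real.log a) :=
    Real.exp_log (by linarith)
  have h5 : (0:ℝ) ≤ Real.log (Real.log (Real.log a)) := Real.log_nonneg hLL1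
  linarith

/-- As `a → ∞`, `M₁(a) = O(log a / (log log a − log log log a))`. -/
theorem M1_isBigO :
    (fun a : ℕ => (M1 a : ℝ)) =O[Filter.atTop]
      fun a : ℕ =>
        Real.log a / (Real.log (Real.log a) - Real.log (Real.log (Real.log a))) := by
  rw [Asymptotics.isBigO_iff]
  refine ⟨6, ?_⟩
  filter_upwards [Filter.eventually_ge_atTop 21] with a ha
  obtain ⟨hL3, hD⟩ := aux_logs a ha
  set L := Real.log a with hL
  set D := Real.log (Real.log a) - Real.log (Real.log (Real.log a)) with hDd
  set B := 6 * (L / D) with hB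
  have hLD : 0 ≤ L / D := div_nonneg (by linarith) hD.le
  have hB0 : 0 ≤ B := by rw [hB]; linarith
  have hM := M1_le a (by omega)
  set F := (Finset.Icc 1 a).filter (fun j => j ! ≤ a) with hF
  have hsub : F ⊆ Finset.Icc 1 ⌊B⌋₊ := by
    intro j hj
    rw [hF, Finset.mem_filter, Finset.mem_Icc] at hj
    rw [Finset.mem_Icc]
    exact ⟨hj.1.1, Nat.le_floor (elem_bound a ha j hj.1.1 hj.2)⟩
  have hcard : F.card ≤ ⌊B⌋₊ := by
    calc F.card ≤ (Finset.Icc 1 ⌊B⌋₊).card := Finset.card_le_card hsub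
      _ = ⌊B⌋₊ := by rw [Nat.card_Icc]; omega
  have hnorm : ‖(M1 a : ℝ)‖ = (M1 a : ℝ) := by
    rw [Real.norm_eq_abs, abs_of_nonneg (by positivity)]
  rw [hnorm]
  calc (M1 a : ℝ) ≤ (F.card : ℝ) := by exact_mod_cast hM
    _ ≤ (⌊B⌋₊ : ℝ) := by exact_mod_cast hcard
    _ ≤ B := Nat.floor_le hB0
    _ = 6 * (L / D) := hB
    _ ≤ 6 * ‖L / D‖ := by
        have := le_abs_self (L / D)
        rw [Real.norm_eq_abs]
        linarith
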